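/- Fix η > 0 and let ν^+(λ) = -1 + √(1+λ). There exist C, δ > 0 such that for all λ ∈ B(0,δ) and all x ≤ y ≤ 0, e^{ηx}|e^{ν^+(λ)(x-y)} - 1| ≤ C|λ|. -/

import Mathlib

/-- Spatial eigenvalue `ν⁺(λ) = -1 + √(1+λ)` of `∂ₓₓ + 2∂ₓ - λ`. -/
noncomputable def nuP (l : ℂ) : ℂ := -1 + (1 + l) ^ ((1:ℂ)/2)

open Complex in
lemma aux_exp_sub_one (z : ℂ) :
    ‖Complex.exp z - 1‖ ≤ 2 * ‖z‖ * Real.exp (‖z‖) := by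
  rcases le_or_gt (‖z‖) 1 with h | h
  · calc ‖Complex.exp z - 1‖ ≤ 2 * ‖z‖ :=
        Complex.norm_exp_sub_one_le h
      _ ≤ 2 * ‖z‖ * Real.exp (‖z‖) := by
        nlinarith [Real.one_le_exp (norm_nonneg z), norm_nonneg z]
  · have h1 : ‖Complex.exp z - 1‖ ≤ Real.exp z.re + 1 := by
      calc ‖Complex.exp z - 1‖ ≤ ‖Complex.exp z‖ + ‖(1:ℂ)‖ := by
            simpa using norm_sub_le (Complex.exp z) 1
        _ = Real.exp z.re + 1 := by simp [Complex.norm_exp]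
    have h2 : Real.exp z.re ≤ Real.exp (‖z‖) :=
      Real.exp_le_exp.2 (Complex.re_le_norm z)
    have h3 : (1:ℝ) ≤ Real.exp (‖z‖) := Real.one_le_exp (norm_nonneg z)
    nlinarith [Real.exp_pos (‖z‖)]

open Complex in
lemma aux_nu_bound (l : ℂ) (hl : ‖l‖ < 1/2) :
    ‖nuP l‖ ≤ ‖l‖ := by
  set w : ℂ := (1 + l) ^ ((1:ℂ)/2) with hw
  have hne : (1 : ℂ) + l ≠ 0 := by
    intro h
    have : ‖l‖ = 1 := by
      have : l = -1 := by linear_combination h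
      simp [this]
    linarith
  have hsq : w * w = 1 + l := by
    rw [hw, ← Complex.cpow_add _ _ hne]
    norm_num
  have hre : 0 ≤ w.re := by
    rw [hw, Complex.cpow_def_of_ne_zero hne, Complex.exp_re]
    apply mul_nonneg (Real.exp_pos _).le
    apply Real.cos_nonneg_of_mem_Icc
    have harg := Complex.arg_mem_Ioc (1 + l)
    have him : (Complex.log (1 + l) * ((1:ℂ)/2)).im = (1 + l).arg / 2 := by
      simp [Complex.mul_im, Complex.log_im]
      ring
    rw [him]
    have h1 := harg.1
    have h2 := harg.2
    have hpi := Real.pi_pos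
    simp only [Set.mem_Icc]
    constructor <;> linarith
  have hwp1 : (1:ℝ) ≤ ‖w + 1‖ := by
    have := Complex.re_le_norm (w + 1)
    simp only [Complex.add_re, Complex.one_re] at this
    linarith
  have hprod : (w - 1) * (w + 1) = l := by ring_nf; linear_combination hsq
  have : ‖w - 1‖ * ‖w + 1‖ = ‖l‖ := by
    rw [← norm_mul, hprod]
  have hnu : nuP l = w - 1 := by rw [nuP, hw]; ring
  rw [hnu]
  nlinarith [norm_nonneg (w - 1)]

theorem stmt_10 (η : ℝ) (hη : 0 < η) :
    ∃ C > (0:ℝ), ∃ δ > (0:ℝ), ∀ l : ℂ, ‖l‖ < δ →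
      ∀ x y : ℝ, x ≤ y → y ≤ 0 →
        Real.exp (η * x) * ‖Complex.exp (nuP l * ((x:ℂ) - y)) - 1‖ ≤
          C * ‖l‖ := by
  refine ⟨4/η, by positivity, min (1/2) (η/2), by positivity, ?_⟩
  intro l hl x y hxy hy0
  set z : ℂ := nuP l * ((x:ℂ) - y) with hz
  have hl2 : ‖l‖ < 1/2 := lt_of_lt_of_le hl (min_le_left _ _)
  have hlη : ‖l‖ ≤ η/2 := le_of_lt (lt_of_lt_of_le hl (min_le_right _ _))
  have hxy' : ‖(x:ℂ) - y‖ = y - x := by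
    rw [show ((x:ℂ) - y) = ((x - y : ℝ) : ℂ) by push_cast; ring, Complex.norm_real, Real.norm_eq_abs,
      abs_of_nonpos (by linarith)]
    ring
  have hzb : ‖z‖ ≤ ‖l‖ * (-x) := by
    rw [hz, norm_mul, hxy']
    calc ‖nuP l‖ * (y - x) ≤ ‖l‖ * (y - x) :=
          mul_le_mul_of_nonneg_right (aux_nu_bound l hl2) (by linarith)
      _ ≤ ‖l‖ * (-x) := by
          apply mul_le_mul_of_nonneg_left (by linarith) (norm_nonneg l)
  have hzb2 : ‖z‖ ≤ (η/2) * (-x) := by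
    calc ‖z‖ ≤ ‖l‖ * (-x) := hzb
      _ ≤ (η/2) * (-x) := mul_le_mul_of_nonneg_right hlη (by linarith)
  have key : Real.exp (η * x) * ‖Complex.exp z - 1‖
      ≤ 2 * (‖l‖ * (-x)) * Real.exp ((η/2) * x) := by
    calc Real.exp (η * x) * ‖Complex.exp z - 1‖
        ≤ Real.exp (η * x) * (2 * ‖z‖ * Real.exp (‖z‖)) :=
          mul_le_mul_of_nonneg_left (aux_exp_sub_one z) (Real.exp_pos _).le
      _ ≤ Real.exp (η * x) * (2 * (‖l‖ * (-x)) * Real.exp ((η/2) * (-x))) := by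
          apply mul_le_mul_of_nonneg_left _ (Real.exp_pos _).le
          apply mul_le_mul (by linarith) (Real.exp_le_exp.2 hzb2) (Real.exp_pos _).le
          nlinarith [norm_nonneg l]
      _ = 2 * (‖l‖ * (-x)) * Real.exp ((η/2) * x) := by
          have hee : Real.exp (η * x) * Real.exp ((η/2) * (-x)) = Real.exp ((η/2) * x) := by
            rw [← Real.exp_add]; ring_nf
          rw [← hee]; ring
  have hx0 : x ≤ 0 := le_trans hxy hy0
  have hdecay : (-x) * Real.exp ((η/2) * x) ≤ 2/η := by
    have h1 : (η/2) * (-x) + 1 ≤ Real.exp ((η/2) * (-x)) := Real.add_one_le_exp _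
    have h2 : Real.exp ((η/2) * x) * Real.exp ((η/2) * (-x)) = 1 := by
      rw [← Real.exp_add]; ring_nf; exact Real.exp_zero
    have h3 := Real.exp_pos ((η/2) * x)
    have h4 := Real.exp_pos ((η/2) * (-x))
    rw [le_div_iff₀ hη]
    nlinarith [mul_le_mul_of_nonneg_right h1 h3.le]
  calc Real.exp (η * x) * ‖Complex.exp z - 1‖
      ≤ 2 * (‖l‖ * (-x)) * Real.exp ((η/2) * x) := key
    _ = 2 * ‖l‖ * ((-x) * Real.exp ((η/2) * x)) := by ring
    _ ≤ 2 * ‖l‖ * (2/η) :=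
        mul_le_mul_of_nonneg_left hdecay (by positivity)
    _ = 4/η * ‖l‖ := by field_simp; ring
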